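/- There exists a constant c > 0 such that for every L ≥ 1, every α ∈ (0,1], every 0 ≤ k ≤ L−1 and every t ≥ 0, the birth-and-death chain with parameters L and α satisfies P(X_{t'} ≤ k for all 0 ≤ t' ≤ t | X_0 = 0) = P(X_{t'} ≥ L−k for all 0 ≤ t' ≤ t | X_0 = L), and |P(X_{t'} ≤ k for all 0 ≤ t' ≤ t | X_0 = 0) − (1 − α/(k+1))^t| ≤ c·k·α. -/

import Mathlib

open MeasureTheory Filter Topology

/-- Transition probabilities of the birth-and-death chain on `{0,…,L}` with parameter `α`:
`P(0,1) = P(L,L−1) = α`, `P(0,0) = P(L,L) = 1−α`, and `P(i,i+1) = P(i,i−1) = 1/2` for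
`0 < i < L`. -/
noncomputable def bdKernel (L : ℕ) (α : ℝ) (i j : ℕ) : ℝ :=
  if i = 0 then (if j = 1 then α else if j = 0 then 1 - α else 0)
  else if i = L then (if j = L - 1 then α else if j = L then 1 - α else 0)
  else if i < L then (if j = i + 1 ∨ j = i - 1 then 1 / 2 else 0)
  else 0

/-- `bdDist L α x t j = P^t(x, j)`, the probability that the birth-and-death chain started at
`x` is at state `j` at time `t`. -/
noncomputable def bdDist (L : ℕ) (α : ℝ) (x : ℕ) : ℕ → ℕ → ℝ
  | 0 => fun j => if j = x then 1 else 0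
  | t + 1 => fun j => ∑ i ∈ Finset.range (L + 1), bdDist L α x t i * bdKernel L α i j

/-- Total variation distance between two distributions on the state space `{0,…,L}`. -/
noncomputable def bdTV (L : ℕ) (μ ν : ℕ → ℝ) : ℝ :=
  ⨆ A : Set ℕ,
    |∑ i ∈ Finset.range (L + 1), Set.indicator A μ i -
      ∑ i ∈ Finset.range (L + 1), Set.indicator A ν i|

open Classical in
/-- `bdStay L α T x A = P(X_t ∈ A_t for all 0 ≤ t ≤ T | X_0 = x)` for the birth-and-death
chain with parameters `L` and `α`. -/
noncomputable def bdStay (L : ℕ) (α : ℝ) (T : ℕ) (x : ℕ) (A : ℕ → Set ℕ) : ℝ :=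
  ∑ p : Fin (T + 1) → Fin (L + 1),
    if (p 0 : ℕ) = x ∧ ∀ t : Fin (T + 1), (p t : ℕ) ∈ A (t : ℕ) then
      ∏ i : Fin T, bdKernel L α (p i.castSucc) (p i.succ) else 0

/-- The separation `S^A_T(0,L)` of a separating sequence `A` for the birth-and-death chain. -/
noncomputable def bdSep (L : ℕ) (α : ℝ) (T : ℕ) (A : ℕ → Set ℕ) : ℝ :=
  bdStay L α T 0 A + bdStay L α T L (fun t => (A t)ᶜ)

open Classical in
lemma bdStay_zero (L : ℕ) (α : ℝ) (x : ℕ) (hx : x ≤ L) (A : ℕ → Set ℕ) :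
    bdStay L α 0 x A = if x ∈ A 0 then 1 else 0 := by
  unfold bdStay
  rw [Fintype.sum_equiv (Equiv.funUnique (Fin 1) (Fin (L+1))) _
    (fun b : Fin (L+1) => if (b : ℕ) = x ∧ x ∈ A 0 then 1 else 0)]
  · rw [Finset.sum_eq_single (⟨x, by omega⟩ : Fin (L+1))]
    · simp
    · intro b _ hb
      have : (b : ℕ) ≠ x := fun h => hb (by ext; simpa using h)
      simp [this]
    · simp
  · intro p
    have h0 : ((Equiv.funUnique (Fin 1) (Fin (L+1))) p : Fin (L+1)) = p 0 := rfl
    have hiff : (∀ t : Fin 1, ((p t):ℕ) ∈ A (t:ℕ)) ↔ ((p 0 : ℕ) ∈ A 0) :=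
      ⟨fun H => H 0, fun H t => by rw [Subsingleton.elim t 0]; exact H⟩
    rw [h0]
    by_cases h : (p 0 : ℕ) = x
    · simp [Fin.forall_fin_one, h]
    · rw [if_neg (by tauto), if_neg (by tauto)]

open Classical in
lemma bdStay_succ (L : ℕ) (α : ℝ) (T : ℕ) (x : ℕ) (hx : x ≤ L) (S : Set ℕ) :
    bdStay L α (T+1) x (fun _ => S) =
      if x ∈ S then
        ∑ y ∈ Finset.range (L+1), bdKernel L α x y * bdStay L α T y (fun _ => S)
      else 0 := by
  unfold bdStay
  rw [Fintype.sum_equiv (Fin.consEquiv (fun _ : Fin (T+2) => Fin (L+1))).symm _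
    (fun yq : Fin (L+1) × (Fin (T+1) → Fin (L+1)) =>
      if ((yq.1 : ℕ) = x ∧ ((yq.1 : ℕ) ∈ S ∧ ∀ t : Fin (T+1), (yq.2 t : ℕ) ∈ S)) then
        bdKernel L α yq.1 (yq.2 0) *
          ∏ i : Fin T, bdKernel L α (yq.2 i.castSucc) (yq.2 i.succ)
      else 0)]
  · rw [Fintype.sum_prod_type]
    rw [Finset.sum_eq_single (⟨x, by omega⟩ : Fin (L+1))]
    · by_cases hS : x ∈ S
      · simp only [hS, if_true, true_and]
        rw [← Fin.sum_univ_eq_sum_range (fun y => bdKernel L α x y *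
            (∑ q : Fin (T+1) → Fin (L+1), if ((q 0 : ℕ) = y ∧ ∀ t : Fin (T+1), (q t : ℕ) ∈ S)
              then ∏ i : Fin T, bdKernel L α (q i.castSucc) (q i.succ) else 0)) (L+1)]
        simp only [Finset.mul_sum]
        rw [Finset.sum_comm]
        apply Finset.sum_congr rfl
        intro q _
        rw [Finset.sum_eq_single (q 0)]
        · by_cases hC : ∀ t : Fin (T+1), (q t : ℕ) ∈ S
          · simp [hC]
          · simp [hC]
        · intro b _ hb
          have hne : ¬ ((q 0 : ℕ) = (b : ℕ)) := fun h => hb (by ext; simpa using h.symm)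
          simp [hne]
        · simp
      · simp only [hS, if_false]
        apply Finset.sum_eq_zero
        intro q _
        rw [if_neg (by simpa using fun h1 (h2 : x ∈ S) _ => hS h2)]
    · intro b _ hb
      have hbx : (b : ℕ) ≠ x := fun h => hb (by ext; simpa using h)
      exact Finset.sum_eq_zero fun q _ => by rw [if_neg (by tauto)]
    · simp
  · intro p
    have hcond := Fin.forall_fin_succ (P := fun t : Fin (T+2) => ((p t):ℕ) ∈ S)
    have hval : (∏ i : Fin (T+1), bdKernel L α (p i.castSucc) (p i.succ))
        = bdKernel L α (p 0) (p (0 : Fin (T+1)).succ) *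
          ∏ i : Fin T, bdKernel L α (p (i.castSucc).succ) (p i.succ.succ) := by
      rw [Fin.prod_univ_succ (fun i : Fin (T+1) => bdKernel L α (p i.castSucc) (p i.succ))]
      simp [Fin.succ_castSucc, -Fin.castSucc_succ]
    dsimp only [Fin.consEquiv, Equiv.coe_fn_symm_mk, Fin.tail]
    rw [if_congr (and_congr Iff.rfl hcond) hval rfl]
    congr 1

lemma bdKernel_rev (L : ℕ) (hL : 1 ≤ L) (α : ℝ) (a b : ℕ) (ha : a ≤ L) (hb : b ≤ L) :
    bdKernel L α (L - a) (L - b) = bdKernel L α a b := by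
  unfold bdKernel
  split_ifs <;> first | rfl | omega

open Classical in
lemma bdStay_symm (L : ℕ) (hL : 1 ≤ L) (α : ℝ) (k : ℕ) (hk : k ≤ L - 1) (T : ℕ) :
    bdStay L α T 0 (fun _ => {i : ℕ | i ≤ k})
      = bdStay L α T L (fun _ => {i : ℕ | L - k ≤ i}) := by
  unfold bdStay
  refine Fintype.sum_equiv ((Equiv.refl (Fin (T+1))).arrowCongr (Fin.revPerm)) _ _ ?_
  intro p
  have hrev : ∀ m : Fin (L + 1), ((Fin.rev m : Fin (L+1)) : ℕ) = L - (m : ℕ) := by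
    intro m; rw [Fin.val_rev]; omega
  have happ : ∀ t : Fin (T+1),
      ((((Equiv.refl (Fin (T+1))).arrowCongr (Fin.revPerm)) p) t : ℕ) = L - (p t : ℕ) := by
    intro t
    simp [Equiv.arrowCongr, Fin.revPerm, hrev]
  have hcond : ((p 0 : ℕ) = 0 ∧ ∀ t : Fin (T+1), (p t : ℕ) ∈ {i : ℕ | i ≤ k}) ↔
      ((L - (p 0 : ℕ)) = L ∧ ∀ t : Fin (T+1), (L - (p t : ℕ)) ∈ {i : ℕ | L - k ≤ i}) := by
    simp only [Set.mem_setOf_eq]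
    constructor
    · rintro ⟨h1, h2⟩
      refine ⟨by omega, fun t => ?_⟩
      have := h2 t
      have := (p t).isLt
      omega
    · rintro ⟨h1, h2⟩
      refine ⟨by have := (p 0).isLt; omega, fun t => ?_⟩
      have := h2 t
      have := (p t).isLt
      omega
  have hprod : (∏ i : Fin T, bdKernel L α (p i.castSucc) (p i.succ)) =
      ∏ i : Fin T, bdKernel L α (L - (p i.castSucc : ℕ)) (L - (p i.succ : ℕ)) := by
    apply Finset.prod_congr rfl
    intro i _
    rw [bdKernel_rev L hL α _ _ (by omega) (by omega)]
  simp only [happ]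
  by_cases hc : ((p 0 : ℕ) = 0 ∧ ∀ t : Fin (T+1), (p t : ℕ) ∈ {i : ℕ | i ≤ k})
  · rw [if_pos hc, if_pos (hcond.mp hc), hprod]
  · rw [if_neg hc, if_neg (fun h => hc (hcond.mpr h))]

noncomputable def Mker (α : ℝ) (x y : ℕ) : ℝ :=
  if x = 0 then (if y = 1 then α else if y = 0 then 1 - α else 0)
  else if y = x + 1 ∨ y = x - 1 then 1 / 2 else 0

noncomputable def Fs (k : ℕ) (α : ℝ) : ℕ → ℕ → ℝ
  | 0, x => if x ≤ k then 1 else 0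
  | t + 1, x => if x ≤ k then ∑ y ∈ Finset.range (k + 1), Mker α x y * Fs k α t y else 0

noncomputable def Ts (k : ℕ) (α : ℝ) : ℕ → ℕ → ℕ → ℝ
  | 0, x, y => if x = y then 1 else 0
  | t + 1, x, y => ∑ z ∈ Finset.range (k + 1), Mker α x z * Ts k α t z y

noncomputable def hf (k : ℕ) (α : ℝ) : ℕ → ℝ
  | 0 => 1
  | 1 => 1 - 1 / ((k : ℝ) + 1)
  | n + 2 => 2 * (1 - α / ((k : ℝ) + 1)) * hf k α (n + 1) - hf k α n

noncomputable def Gs (k : ℕ) (α : ℝ) : ℕ → ℕ → ℝ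
  | 0, x => hf k α x
  | t + 1, x => ∑ y ∈ Finset.range (k + 1), Mker α x y * Gs k α t y

section rowsums
variable {k : ℕ} {α : ℝ} (f : ℕ → ℝ)

lemma Mker_nonneg (hα0 : 0 ≤ α) (hα1 : α ≤ 1) (x y : ℕ) : 0 ≤ Mker α x y := by
  unfold Mker; split_ifs <;> norm_num [hα0, hα1]

lemma row0 (hk : 1 ≤ k) :
    ∑ y ∈ Finset.range (k + 1), Mker α 0 y * f y = (1 - α) * f 0 + α * f 1 := by
  have step : ∀ y ∈ Finset.range (k + 1), Mker α 0 y * f y =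
      (if y = 0 then (1 - α) * f y else 0) + (if y = 1 then α * f y else 0) := by
    intro y _
    unfold Mker
    rcases eq_or_ne y 1 with h1 | h1
    · simp [h1]
    · rcases eq_or_ne y 0 with h0 | h0
      · simp [h0, h1]
      · simp [h0, h1]
  rw [Finset.sum_congr rfl step, Finset.sum_add_distrib,
    Finset.sum_ite_eq' (Finset.range (k+1)) 0 (fun y => (1-α) * f y),
    Finset.sum_ite_eq' (Finset.range (k+1)) 1 (fun y => α * f y)]
  rw [if_pos (by simp), if_pos (by simp [Finset.mem_range]; omega)]

lemma rowmid (x : ℕ) (hx1 : 1 ≤ x) (hxk : x + 1 ≤ k) :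
    ∑ y ∈ Finset.range (k + 1), Mker α x y * f y = (f (x - 1) + f (x + 1)) / 2 := by
  have hx0 : x ≠ 0 := by omega
  have step : ∀ y ∈ Finset.range (k + 1), Mker α x y * f y =
      (if y = x - 1 then f y / 2 else 0) + (if y = x + 1 then f y / 2 else 0) := by
    intro y _
    simp only [Mker, if_neg hx0]
    rcases eq_or_ne y (x-1) with h1 | h1
    · rw [if_pos (Or.inr h1), if_pos h1, if_neg (by omega)]; ring
    · rcases eq_or_ne y (x+1) with h2 | h2
      · rw [if_pos (Or.inl h2), if_neg h1, if_pos h2]; ring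
      · rw [if_neg (by tauto), if_neg h1, if_neg h2]; ring
  rw [Finset.sum_congr rfl step, Finset.sum_add_distrib,
    Finset.sum_ite_eq' (Finset.range (k+1)) (x-1) (fun y => f y / 2),
    Finset.sum_ite_eq' (Finset.range (k+1)) (x+1) (fun y => f y / 2)]
  rw [if_pos (by simp [Finset.mem_range]; omega), if_pos (by simp [Finset.mem_range]; omega)]
  ring

lemma rowtop (hk : 1 ≤ k) :
    ∑ y ∈ Finset.range (k + 1), Mker α k y * f y = f (k - 1) / 2 := by
  have hk0 : k ≠ 0 := by omega
  have step : ∀ y ∈ Finset.range (k + 1), Mker α k y * f y =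
      (if y = k - 1 then f y / 2 else 0) := by
    intro y hy
    rw [Finset.mem_range] at hy
    simp only [Mker, if_neg hk0]
    rcases eq_or_ne y (k-1) with h1 | h1
    · rw [if_pos (Or.inr h1), if_pos h1]; ring
    · rw [if_neg (by omega), if_neg h1]; ring
  rw [Finset.sum_congr rfl step,
    Finset.sum_ite_eq' (Finset.range (k+1)) (k-1) (fun y => f y / 2)]
  rw [if_pos (by rw [Finset.mem_range]; omega)]
end rowsums

section facts
variable {k : ℕ} {α : ℝ}

lemma Fs_gt (t x : ℕ) (hx : ¬ (x ≤ k)) : Fs k α t x = 0 := by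
  cases t <;> simp [Fs, hx]

lemma Fs_nonneg (hα0 : 0 ≤ α) (hα1 : α ≤ 1) (t : ℕ) : ∀ x, 0 ≤ Fs k α t x := by
  induction t with
  | zero => intro x; unfold Fs; split_ifs <;> norm_num
  | succ t ih =>
    intro x
    unfold Fs
    split_ifs
    · exact Finset.sum_nonneg fun y _ => mul_nonneg (Mker_nonneg hα0 hα1 x y) (ih y)
    · exact le_rfl

lemma rowsum (hk : 1 ≤ k) (x : ℕ) (hx : x ≤ k) :
    ∑ y ∈ Finset.range (k + 1), Mker α x y = if x = k then 1/2 else 1 := by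
  rcases eq_or_ne x k with hxk | hxk
  · rw [if_pos hxk, hxk]
    simpa using rowtop (α := α) (fun _ => (1:ℝ)) hk
  · rw [if_neg hxk]
    rcases Nat.eq_zero_or_pos x with h0 | h0
    · subst h0
      have := row0 (k := k) (α := α) (fun _ => (1:ℝ)) hk
      simp at this
      simpa using this
    · have := rowmid (k := k) (α := α) (fun _ => (1:ℝ)) x h0 (by omega)
      simp at this
      simpa using this

lemma Fs_le_one (hα0 : 0 ≤ α) (hα1 : α ≤ 1) (hk : 1 ≤ k) (t : ℕ) : ∀ x, Fs k α t x ≤ 1 := by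
  induction t with
  | zero => intro x; unfold Fs; split_ifs <;> norm_num
  | succ t ih =>
    intro x
    unfold Fs
    split_ifs with hx
    · calc ∑ y ∈ Finset.range (k + 1), Mker α x y * Fs k α t y
          ≤ ∑ y ∈ Finset.range (k + 1), Mker α x y * 1 := by
            apply Finset.sum_le_sum
            intro y _
            exact mul_le_mul_of_nonneg_left (ih y) (Mker_nonneg hα0 hα1 x y)
        _ = ∑ y ∈ Finset.range (k + 1), Mker α x y := by simp
        _ = if x = k then 1/2 else 1 := rowsum hk x hx
        _ ≤ 1 := by split_ifs <;> norm_num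
    · norm_num

end facts

section lower
variable {k : ℕ} {α : ℝ}

lemma lam_nonneg (hα1 : α ≤ 1) : 0 ≤ 1 - α/((k:ℝ)+1) := by
  have hK : (1:ℝ) ≤ (k:ℝ)+1 := by
    have : (0:ℝ) ≤ (k:ℝ) := Nat.cast_nonneg k
    linarith
  have : α / ((k:ℝ)+1) ≤ 1 := by
    rw [div_le_one (by positivity)]
    linarith
  linarith

lemma lam_le_one (hα0 : 0 ≤ α) : 1 - α/((k:ℝ)+1) ≤ 1 := by
  have : 0 ≤ α / ((k:ℝ)+1) := by positivity
  linarith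

lemma Fs_low (hα0 : 0 ≤ α) (hα1 : α ≤ 1) (hk : 1 ≤ k) :
    ∀ t, ∀ x, x ≤ k →
      (1 - α/((k:ℝ)+1))^t * (((k:ℝ)+1-(x:ℝ))/((k:ℝ)+1)) ≤ Fs k α t x := by
  have hK : (0:ℝ) < (k:ℝ)+1 := by positivity
  have hl0 := lam_nonneg (k := k) hα1
  have hl1 := lam_le_one (k := k) (α := α) hα0
  set lam : ℝ := 1 - α/((k:ℝ)+1) with hlam
  intro t
  induction t with
  | zero =>
    intro x hx
    unfold Fs
    rw [if_pos hx, pow_zero, one_mul, div_le_one hK]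
    have : (0:ℝ) ≤ (x:ℝ) := Nat.cast_nonneg x
    linarith
  | succ t ih =>
    intro x hx
    unfold Fs
    rw [if_pos hx]
    have hstep : ∑ y ∈ Finset.range (k+1),
        Mker α x y * (lam^t * (((k:ℝ)+1-(y:ℝ))/((k:ℝ)+1)))
        ≤ ∑ y ∈ Finset.range (k+1), Mker α x y * Fs k α t y := by
      apply Finset.sum_le_sum
      intro y hy
      rw [Finset.mem_range] at hy
      exact mul_le_mul_of_nonneg_left (ih y (by omega)) (Mker_nonneg hα0 hα1 x y)
    refine le_trans ?_ hstep
    have hpt : (0:ℝ) ≤ lam ^ t := pow_nonneg hl0 t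
    rcases eq_or_ne x k with hxk | hxk
    · rw [hxk]
      rw [rowtop (fun y => lam^t * (((k:ℝ)+1-(y:ℝ))/((k:ℝ)+1))) hk]
      have hc : ((k-1 : ℕ) : ℝ) = (k:ℝ) - 1 := by
        rw [Nat.cast_sub hk]; norm_num
      rw [hc]
      have h2 : ((k:ℝ)+1-((k:ℝ)-1))/((k:ℝ)+1) = 2/((k:ℝ)+1) := by ring_nf
      rw [h2, pow_succ]
      have hg : ((k:ℝ)+1-(k:ℝ))/((k:ℝ)+1) = 1/((k:ℝ)+1) := by ring_nf
      rw [hg]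
      calc lam^t * lam * (1/((k:ℝ)+1)) ≤ lam^t * 1 * (1/((k:ℝ)+1)) := by
            apply mul_le_mul_of_nonneg_right _ (by positivity)
            exact mul_le_mul_of_nonneg_left hl1 hpt
        _ = lam^t * (2/((k:ℝ)+1))/2 := by ring
    · rcases Nat.eq_zero_or_pos x with h0 | h0
      · subst h0
        rw [row0 (fun y => lam^t * (((k:ℝ)+1-(y:ℝ))/((k:ℝ)+1))) hk]
        have : (1-α) * (lam^t * (((k:ℝ)+1-(0:ℝ))/((k:ℝ)+1)))
            + α * (lam^t * (((k:ℝ)+1-(1:ℝ))/((k:ℝ)+1))) = lam^t * lam := by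
          rw [hlam]; field_simp; ring
        push_cast
        rw [this, pow_succ]
        have hg : ((k:ℝ)+1-(0:ℝ))/((k:ℝ)+1) = 1 := by rw [sub_zero, div_self hK.ne']
        rw [hg, mul_one]
      · rw [rowmid (fun y => lam^t * (((k:ℝ)+1-(y:ℝ))/((k:ℝ)+1))) x h0 (by omega)]
        have hc : ((x-1 : ℕ) : ℝ) = (x:ℝ) - 1 := by
          rw [Nat.cast_sub h0]; norm_num
        push_cast [hc]
        have : (lam^t * (((k:ℝ)+1-((x:ℝ)-1))/((k:ℝ)+1))
            + lam^t * (((k:ℝ)+1-((x:ℝ)+1))/((k:ℝ)+1)))/2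
            = lam^t * (((k:ℝ)+1-(x:ℝ))/((k:ℝ)+1)) := by ring
        rw [this, pow_succ]
        have hgl : (0:ℝ) ≤ ((k:ℝ)+1-(x:ℝ))/((k:ℝ)+1) := by
          apply div_nonneg _ (le_of_lt hK)
          have : (x:ℝ) ≤ (k:ℝ) := by exact_mod_cast hx
          linarith
        calc lam^t * lam * (((k:ℝ)+1-(x:ℝ))/((k:ℝ)+1))
            ≤ lam^t * 1 * (((k:ℝ)+1-(x:ℝ))/((k:ℝ)+1)) := by
              apply mul_le_mul_of_nonneg_right _ hgl
              exact mul_le_mul_of_nonneg_left hl1 hpt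
          _ = lam^t * (((k:ℝ)+1-(x:ℝ))/((k:ℝ)+1)) := by ring

end lower

noncomputable def uf (k : ℕ) (α : ℝ) (x : ℕ) : ℝ :=
  (1 - (x:ℝ)/((k:ℝ)+1)) - hf k α x

noncomputable def df (k : ℕ) (α : ℝ) (x : ℕ) : ℝ := uf k α (x+1) - uf k α x

section hbounds
variable {k : ℕ} {α : ℝ}

lemma hf_zero : hf k α 0 = 1 := rfl
lemma hf_one : hf k α 1 = 1 - 1/((k:ℝ)+1) := rfl
lemma hf_ss (x : ℕ) :
    hf k α (x+2) = 2*(1 - α/((k:ℝ)+1)) * hf k α (x+1) - hf k α x := rfl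

lemma df_rec (x : ℕ) :
    df k α (x+1) = df k α x + 2*(α/((k:ℝ)+1)) * hf k α (x+1) := by
  unfold df uf
  rw [hf_ss x]
  push_cast
  ring

lemma hbound (hk : 1 ≤ k) (hα0 : 0 ≤ α) (hsm : 2*α*((k:ℝ)+1) ≤ 1) :
    ∀ x, x ≤ k + 1 →
      |uf k α x| ≤ 2*α*(x:ℝ)^2/((k:ℝ)+1) ∧ |hf k α x| ≤ 2 ∧
        (x ≤ k → |df k α x| ≤ 4*α*(x:ℝ)/((k:ℝ)+1)) := by
  have hK : (0:ℝ) < (k:ℝ)+1 := by positivity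
  have hKk : (k:ℝ) ≤ (k:ℝ)+1 := by linarith
  intro x
  induction x with
  | zero =>
    intro _
    have h0 : uf k α 0 = 0 := by unfold uf; rw [hf_zero]; norm_num
    have h1 : df k α 0 = 0 := by
      unfold df uf; rw [hf_zero, hf_one]; push_cast; ring
    refine ⟨by rw [h0]; simp, by rw [hf_zero]; norm_num, fun _ => by rw [h1]; simp⟩
  | succ x ih =>
    intro hx1
    have hxk : x ≤ k := by omega
    obtain ⟨hu, hh, hd⟩ := ih (by omega)
    have hd' := hd hxk
    have hux1 : |uf k α (x+1)| ≤ 2*α*((x:ℝ)+1)^2/((k:ℝ)+1) := by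
      have : uf k α (x+1) = uf k α x + df k α x := by unfold df; ring
      rw [this]
      calc |uf k α x + df k α x| ≤ |uf k α x| + |df k α x| := abs_add_le _ _
        _ ≤ 2*α*(x:ℝ)^2/((k:ℝ)+1) + 4*α*(x:ℝ)/((k:ℝ)+1) := add_le_add hu hd'
        _ ≤ 2*α*((x:ℝ)+1)^2/((k:ℝ)+1) := by
            rw [← add_div, div_le_div_iff₀ hK hK]
            have hx0 : (0:ℝ) ≤ (x:ℝ) := Nat.cast_nonneg x
            nlinarith
    have hcast : ((x+1 : ℕ) : ℝ) = (x:ℝ)+1 := by push_cast; ring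
    have hhx1 : |hf k α (x+1)| ≤ 2 := by
      have he : hf k α (x+1) = (1 - ((x:ℝ)+1)/((k:ℝ)+1)) - uf k α (x+1) := by
        unfold uf; rw [hcast]; ring
      rw [he]
      have hq1 : ((x:ℝ)+1)/((k:ℝ)+1) ≤ 1 := by
        rw [div_le_one hK]
        have : (x:ℝ) ≤ (k:ℝ) := by exact_mod_cast hxk
        linarith
      have hq0 : 0 ≤ ((x:ℝ)+1)/((k:ℝ)+1) := by positivity
      have habs1 : |1 - ((x:ℝ)+1)/((k:ℝ)+1)| ≤ 1 := by
        rw [abs_le]; constructor <;> linarith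
      have huK : 2*α*((x:ℝ)+1)^2/((k:ℝ)+1) ≤ 1 := by
        have hx1' : ((x:ℝ)+1) ≤ (k:ℝ)+1 := by
          have : (x:ℝ) ≤ (k:ℝ) := by exact_mod_cast hxk
          linarith
        have hx0 : (0:ℝ) < (x:ℝ)+1 := by positivity
        rw [div_le_one hK]
        nlinarith
      calc |1 - ((x:ℝ)+1)/((k:ℝ)+1) - uf k α (x+1)|
          ≤ |1 - ((x:ℝ)+1)/((k:ℝ)+1)| + |uf k α (x+1)| := abs_sub _ _
        _ ≤ 1 + 1 := add_le_add habs1 (le_trans hux1 huK)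
        _ = 2 := by norm_num
    refine ⟨by push_cast; exact hux1, hhx1, fun hx1k => ?_⟩
    push_cast
    rw [df_rec x]
    calc |df k α x + 2*(α/((k:ℝ)+1)) * hf k α (x+1)|
        ≤ |df k α x| + |2*(α/((k:ℝ)+1)) * hf k α (x+1)| := abs_add_le _ _
      _ ≤ 4*α*(x:ℝ)/((k:ℝ)+1) + 2*(α/((k:ℝ)+1)) * 2 := by
          apply add_le_add hd'
          rw [abs_mul]
          have h2 : |2*(α/((k:ℝ)+1))| = 2*(α/((k:ℝ)+1)) := abs_of_nonneg (by positivity)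
          rw [h2]
          exact mul_le_mul_of_nonneg_left hhx1 (by positivity)
      _ = 4*α*((x:ℝ)+1)/((k:ℝ)+1) := by field_simp; ring
    
end hbounds

section eigen
variable {k : ℕ} {α : ℝ}

lemma Mh_eigen (hk : 1 ≤ k) (x : ℕ) (hx : x ≤ k) :
    ∑ y ∈ Finset.range (k+1), Mker α x y * hf k α y
      = (1 - α/((k:ℝ)+1)) * hf k α x
        + (if x = k then hf k α (k-1)/2 - (1 - α/((k:ℝ)+1)) * hf k α k else 0) := by
  have hK : (0:ℝ) < (k:ℝ)+1 := by positivity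
  rcases eq_or_ne x k with hxk | hxk
  · rw [hxk, if_pos rfl, rowtop (hf k α) hk]
    ring
  · rw [if_neg hxk, add_zero]
    rcases Nat.eq_zero_or_pos x with h0 | h0
    · subst h0
      rw [row0 (hf k α) hk, hf_zero, hf_one]
      field_simp
      ring
    · obtain ⟨m, rfl⟩ : ∃ m, x = m + 1 := ⟨x - 1, by omega⟩
      rw [rowmid (hf k α) (m+1) (by omega) (by omega)]
      have h1 : m + 1 - 1 = m := by omega
      have h2 : m + 1 + 1 = m + 2 := by omega
      rw [h1, h2, hf_ss m]
      ring

lemma delta_bound (hk : 1 ≤ k) (hα0 : 0 ≤ α) (hsm : 2*α*((k:ℝ)+1) ≤ 1) :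
    |hf k α (k-1)/2 - (1 - α/((k:ℝ)+1)) * hf k α k| ≤ 2*(k:ℝ)*α := by
  have hK : (0:ℝ) < (k:ℝ)+1 := by positivity
  have hkk : ((k+1 : ℕ):ℝ) = (k:ℝ)+1 := by push_cast; ring
  have hrec : hf k α (k+1) = 2*(1 - α/((k:ℝ)+1)) * hf k α k - hf k α (k-1) := by
    obtain ⟨m, rfl⟩ : ∃ m, k = m + 1 := ⟨k - 1, by omega⟩
    have h2 : m + 1 + 1 = m + 2 := by omega
    have h1 : m + 1 - 1 = m := by omega
    rw [h1, h2, hf_ss m]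
  have hufeq : hf k α (k+1) = - uf k α (k+1) := by
    unfold uf
    rw [hkk]
    field_simp
    ring
  have hub : |uf k α (k+1)| ≤ 2*α*((k:ℝ)+1) := by
    have := (hbound hk hα0 hsm (k+1) le_rfl).1
    rw [hkk] at this
    calc |uf k α (k+1)| ≤ 2*α*((k:ℝ)+1)^2/((k:ℝ)+1) := this
      _ = 2*α*((k:ℝ)+1) := by field_simp
  have heq : hf k α (k-1)/2 - (1 - α/((k:ℝ)+1)) * hf k α k = - hf k α (k+1) / 2 := by
    rw [hrec]; ring
  rw [heq, hufeq]
  have hk1 : (1:ℝ) ≤ (k:ℝ) := by exact_mod_cast hk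
  calc |-(- uf k α (k+1)) / 2| = |uf k α (k+1)|/2 := by
        rw [neg_neg, abs_div]; norm_num
    _ ≤ 2*α*((k:ℝ)+1)/2 := by linarith
    _ ≤ 2*(k:ℝ)*α := by nlinarith
end eigen

section tees
variable {k : ℕ} {α : ℝ}

lemma Ts_nonneg (hα0 : 0 ≤ α) (hα1 : α ≤ 1) (t : ℕ) : ∀ x y, 0 ≤ Ts k α t x y := by
  induction t with
  | zero => intro x y; unfold Ts; split_ifs <;> norm_num
  | succ t ih =>
    intro x y
    unfold Ts
    exact Finset.sum_nonneg fun z _ => mul_nonneg (Mker_nonneg hα0 hα1 x z) (ih z y)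

lemma Ts_row (t : ℕ) : ∀ x, x ≤ k →
    ∑ y ∈ Finset.range (k+1), Ts k α t x y = Fs k α t x := by
  induction t with
  | zero =>
    intro x hx
    unfold Ts Fs
    rw [if_pos hx, Finset.sum_ite_eq (Finset.range (k+1)) x (fun _ => (1:ℝ))]
    rw [if_pos (by simp [Finset.mem_range]; omega)]
  | succ t ih =>
    intro x hx
    unfold Ts Fs
    rw [if_pos hx, Finset.sum_comm]
    apply Finset.sum_congr rfl
    intro z hz
    rw [Finset.mem_range] at hz
    rw [← Finset.mul_sum, ih z (by omega)]

lemma Ts_le_one (hα0 : 0 ≤ α) (hα1 : α ≤ 1) (hk : 1 ≤ k) (t : ℕ) (x y : ℕ)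
    (hx : x ≤ k) (hy : y ≤ k) : Ts k α t x y ≤ 1 := by
  calc Ts k α t x y ≤ ∑ y' ∈ Finset.range (k+1), Ts k α t x y' :=
        Finset.single_le_sum (fun i _ => Ts_nonneg hα0 hα1 t x i)
          (by simp [Finset.mem_range]; omega)
    _ = Fs k α t x := Ts_row t x hx
    _ ≤ 1 := Fs_le_one hα0 hα1 hk t x

lemma Ts_right (t : ℕ) : ∀ x y, x ≤ k → y ≤ k →
    Ts k α (t+1) x y = ∑ z ∈ Finset.range (k+1), Ts k α t x z * Mker α z y := by
  induction t with
  | zero =>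
    intro x y hx hy
    show ∑ z ∈ Finset.range (k+1), Mker α x z * Ts k α 0 z y = _
    have l : ∀ z ∈ Finset.range (k+1), Mker α x z * Ts k α 0 z y
        = if z = y then Mker α x z else 0 := by
      intro z _
      show Mker α x z * (if z = y then 1 else 0) = _
      rcases eq_or_ne z y with h | h
      · rw [if_pos h, if_pos h, mul_one]
      · rw [if_neg h, if_neg h, mul_zero]
    have r : ∀ z ∈ Finset.range (k+1), Ts k α 0 x z * Mker α z y
        = if z = x then Mker α z y else 0 := by
      intro z _
      show (if x = z then (1:ℝ) else 0) * Mker α z y = _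
      rcases eq_or_ne z x with h | h
      · rw [if_pos h.symm, if_pos h, one_mul]
      · rw [if_neg (fun hh => h hh.symm), if_neg h, zero_mul]
    rw [Finset.sum_congr rfl l, Finset.sum_congr rfl r,
      Finset.sum_ite_eq' (Finset.range (k+1)) y (fun z => Mker α x z),
      Finset.sum_ite_eq' (Finset.range (k+1)) x (fun z => Mker α z y)]
    rw [if_pos (by simp [Finset.mem_range]; omega), if_pos (by simp [Finset.mem_range]; omega)]
  | succ t ih =>
    intro x y hx hy
    show ∑ z ∈ Finset.range (k+1), Mker α x z * Ts k α (t+1) z y = _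
    have : ∀ z ∈ Finset.range (k+1), Mker α x z * Ts k α (t+1) z y
        = ∑ w ∈ Finset.range (k+1), Mker α x z * (Ts k α t z w * Mker α w y) := by
      intro z hz
      rw [Finset.mem_range] at hz
      rw [ih z y (by omega) hy, Finset.mul_sum]
    rw [Finset.sum_congr rfl this, Finset.sum_comm]
    apply Finset.sum_congr rfl
    intro w hw
    show ∑ z ∈ Finset.range (k+1), Mker α x z * (Ts k α t z w * Mker α w y)
      = Ts k α (t+1) x w * Mker α w y
    rw [show Ts k α (t+1) x w = ∑ z ∈ Finset.range (k+1), Mker α x z * Ts k α t z w from rfl,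
      Finset.sum_mul]
    apply Finset.sum_congr rfl
    intro z _
    ring

def pif (α : ℝ) (x : ℕ) : ℝ := if x = 0 then 1 else 2*α

lemma db (hk : 1 ≤ k) (x y : ℕ) (hx : x ≤ k) (hy : y ≤ k) :
    pif α x * Mker α x y = pif α y * Mker α y x := by
  unfold pif Mker
  split_ifs <;> (try omega) <;> ring

lemma Ts_rev (hk : 1 ≤ k) (t : ℕ) : ∀ x y, x ≤ k → y ≤ k →
    pif α x * Ts k α t x y = pif α y * Ts k α t y x := by
  induction t with
  | zero =>
    intro x y hx hy
    unfold Ts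
    rcases eq_or_ne x y with h | h
    · simp [h]
    · rw [if_neg h, if_neg (fun hh => h hh.symm)]
      ring
  | succ t ih =>
    intro x y hx hy
    show pif α x * ∑ z ∈ Finset.range (k+1), Mker α x z * Ts k α t z y = _
    rw [Ts_right t y x hy hx, Finset.mul_sum, Finset.mul_sum]
    apply Finset.sum_congr rfl
    intro z hz
    rw [Finset.mem_range] at hz
    have h1 : pif α x * (Mker α x z * Ts k α t z y)
        = (pif α x * Mker α x z) * Ts k α t z y := by ring
    rw [h1, db hk x z hx (by omega)]
    have h2 : pif α z * Mker α z x * Ts k α t z y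
        = Mker α z x * (pif α z * Ts k α t z y) := by ring
    rw [h2, ih z y (by omega) hy]
    ring

lemma Ts_top_bound (hk : 1 ≤ k) (hα0 : 0 ≤ α) (hα1 : α ≤ 1) (t y : ℕ)
    (hy1 : 1 ≤ y) (hyk : y ≤ k) : Ts k α t 0 y ≤ 2*α := by
  have := Ts_rev (α := α) hk t 0 y (by omega) hyk
  unfold pif at this
  rw [if_pos rfl, if_neg (by omega), one_mul] at this
  rw [this]
  calc 2*α * Ts k α t y 0 ≤ 2*α * 1 :=
        mul_le_mul_of_nonneg_left (Ts_le_one hα0 hα1 hk t y 0 hyk (by omega)) (by positivity)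
    _ = 2*α := by ring

end tees

section claims
variable {k : ℕ} {α : ℝ}

lemma Gs_eq (t : ℕ) : ∀ x, x ≤ k →
    Gs k α t x = ∑ y ∈ Finset.range (k+1), Ts k α t x y * hf k α y := by
  induction t with
  | zero =>
    intro x hx
    show hf k α x = _
    have : ∀ y ∈ Finset.range (k+1), Ts k α 0 x y * hf k α y
        = if y = x then hf k α y else 0 := by
      intro y _
      show (if x = y then (1:ℝ) else 0) * hf k α y = _
      rcases eq_or_ne y x with h | h
      · rw [if_pos h.symm, if_pos h, one_mul]
      · rw [if_neg (fun hh => h hh.symm), if_neg h, zero_mul]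
    rw [Finset.sum_congr rfl this,
      Finset.sum_ite_eq' (Finset.range (k+1)) x (fun y => hf k α y),
      if_pos (by simp [Finset.mem_range]; omega)]
  | succ t ih =>
    intro x hx
    show ∑ y ∈ Finset.range (k+1), Mker α x y * Gs k α t y = _
    have : ∀ y ∈ Finset.range (k+1), Mker α x y * Gs k α t y
        = ∑ w ∈ Finset.range (k+1), Mker α x y * (Ts k α t y w * hf k α w) := by
      intro y hy
      rw [Finset.mem_range] at hy
      rw [ih y (by omega), Finset.mul_sum]
    rw [Finset.sum_congr rfl this, Finset.sum_comm]
    apply Finset.sum_congr rfl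
    intro w _
    show _ = Ts k α (t+1) x w * hf k α w
    rw [show Ts k α (t+1) x w = ∑ y ∈ Finset.range (k+1), Mker α x y * Ts k α t y w from rfl,
      Finset.sum_mul]
    apply Finset.sum_congr rfl
    intro y _
    ring

lemma Gs_bound (hk : 1 ≤ k) (hα0 : 0 ≤ α) (hα1 : α ≤ 1) (hsm : 2*α*((k:ℝ)+1) ≤ 1) :
    ∀ t x, x ≤ k →
      |Gs k α t x - (1 - α/((k:ℝ)+1))^t * hf k α x|
        ≤ 2*(k:ℝ)*α * (2 - 2 * Fs k α t x) := by
  have hl0 := lam_nonneg (k := k) hα1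
  have hl1 := lam_le_one (k := k) (α := α) hα0
  set lam : ℝ := 1 - α/((k:ℝ)+1) with hlam
  have hknn : (0:ℝ) ≤ 2*(k:ℝ)*α := by positivity
  intro t
  induction t with
  | zero =>
    intro x hx
    show |hf k α x - 1 * hf k α x| ≤ _
    rw [one_mul, sub_self, abs_zero]
    unfold Fs
    rw [if_pos hx]
    norm_num
  | succ t ih =>
    intro x hx
    have hsplit : Gs k α (t+1) x - lam^(t+1) * hf k α x
        = (∑ y ∈ Finset.range (k+1), Mker α x y * (Gs k α t y - lam^t * hf k α y))
          + lam^t * ((∑ y ∈ Finset.range (k+1), Mker α x y * hf k α y) - lam * hf k α x) := by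
      show (∑ y ∈ Finset.range (k+1), Mker α x y * Gs k α t y) - lam^(t+1) * hf k α x = _
      have e1 : ∀ y ∈ Finset.range (k+1), Mker α x y * (Gs k α t y - lam^t * hf k α y)
          = Mker α x y * Gs k α t y - lam^t * (Mker α x y * hf k α y) := fun y _ => by ring
      rw [Finset.sum_congr rfl e1, Finset.sum_sub_distrib, ← Finset.mul_sum]
      ring
    have habs1 : |∑ y ∈ Finset.range (k+1), Mker α x y * (Gs k α t y - lam^t * hf k α y)|
        ≤ ∑ y ∈ Finset.range (k+1), Mker α x y * (2*(k:ℝ)*α * (2 - 2 * Fs k α t y)) := by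
      calc |∑ y ∈ Finset.range (k+1), Mker α x y * (Gs k α t y - lam^t * hf k α y)|
          ≤ ∑ y ∈ Finset.range (k+1), |Mker α x y * (Gs k α t y - lam^t * hf k α y)| :=
            Finset.abs_sum_le_sum_abs _ _
        _ ≤ ∑ y ∈ Finset.range (k+1), Mker α x y * (2*(k:ℝ)*α * (2 - 2 * Fs k α t y)) := by
            apply Finset.sum_le_sum
            intro y hy
            rw [Finset.mem_range] at hy
            rw [abs_mul, abs_of_nonneg (Mker_nonneg hα0 hα1 x y)]
            exact mul_le_mul_of_nonneg_left (ih y (by omega)) (Mker_nonneg hα0 hα1 x y)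
    have hrow2 : ∑ y ∈ Finset.range (k+1), Mker α x y * (2*(k:ℝ)*α * (2 - 2 * Fs k α t y))
        = 2*(k:ℝ)*α * (2 * (if x = k then 1/2 else 1) - 2 * Fs k α (t+1) x) := by
      have e2 : ∀ y ∈ Finset.range (k+1), Mker α x y * (2*(k:ℝ)*α * (2 - 2 * Fs k α t y))
          = 2*(k:ℝ)*α * (2 * Mker α x y - 2 * (Mker α x y * Fs k α t y)) := fun y _ => by ring
      rw [Finset.sum_congr rfl e2, ← Finset.mul_sum]
      congr 1
      have e3 : ∑ y ∈ Finset.range (k+1), (2 * Mker α x y - 2 * (Mker α x y * Fs k α t y))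
          = 2 * (∑ y ∈ Finset.range (k+1), Mker α x y)
            - 2 * ∑ y ∈ Finset.range (k+1), Mker α x y * Fs k α t y := by
        rw [Finset.sum_sub_distrib, ← Finset.mul_sum, ← Finset.mul_sum]
      rw [e3, rowsum hk x hx]
      have hfs : Fs k α (t+1) x
          = ∑ y ∈ Finset.range (k+1), Mker α x y * Fs k α t y := by
        rw [show Fs k α (t+1) x
          = if x ≤ k then ∑ y ∈ Finset.range (k+1), Mker α x y * Fs k α t y else 0 from rfl,
          if_pos hx]
      rw [← hfs]
    have heig := Mh_eigen (α := α) hk x hx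
    have hFle := Fs_le_one hα0 hα1 hk (t+1) x
    have hltpow : |lam^t| ≤ 1 := by
      rw [abs_of_nonneg (pow_nonneg hl0 t)]
      exact pow_le_one₀ hl0 hl1
    rcases eq_or_ne x k with hxk | hxk
    · have hdel := delta_bound hk hα0 hsm
      rw [hsplit]
      calc |(∑ y ∈ Finset.range (k+1), Mker α x y * (Gs k α t y - lam^t * hf k α y))
            + lam^t * ((∑ y ∈ Finset.range (k+1), Mker α x y * hf k α y) - lam * hf k α x)|
          ≤ |∑ y ∈ Finset.range (k+1), Mker α x y * (Gs k α t y - lam^t * hf k α y)|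
            + |lam^t * ((∑ y ∈ Finset.range (k+1), Mker α x y * hf k α y) - lam * hf k α x)| :=
            abs_add_le _ _
        _ ≤ 2*(k:ℝ)*α * (2 * (1/2) - 2 * Fs k α (t+1) x) + 2*(k:ℝ)*α := by
            apply add_le_add
            · have hrow2' := hrow2
              rw [if_pos hxk] at hrow2'
              exact habs1.trans (le_of_eq hrow2')
            · rw [abs_mul]
              have : |(∑ y ∈ Finset.range (k+1), Mker α x y * hf k α y) - lam * hf k α x|
                  ≤ 2*(k:ℝ)*α := by
                rw [heig, if_pos hxk, hxk]
                simpa using hdel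
              calc |lam^t| * |(∑ y ∈ Finset.range (k+1), Mker α x y * hf k α y) - lam * hf k α x|
                  ≤ 1 * (2*(k:ℝ)*α) := mul_le_mul hltpow this (abs_nonneg _) zero_le_one
                _ = 2*(k:ℝ)*α := by ring
        _ = 2*(k:ℝ)*α * (2 - 2 * Fs k α (t+1) x) := by ring
    · rw [hsplit, heig, if_neg hxk, add_zero, sub_self, mul_zero, add_zero]
      calc |∑ y ∈ Finset.range (k+1), Mker α x y * (Gs k α t y - lam^t * hf k α y)|
          ≤ 2*(k:ℝ)*α * (2 * (if x = k then 1/2 else 1) - 2 * Fs k α (t+1) x) := by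
            rw [← hrow2]; exact habs1
        _ = 2*(k:ℝ)*α * (2 - 2 * Fs k α (t+1) x) := by rw [if_neg hxk]; ring

end claims

section final
variable {k : ℕ} {α : ℝ}

lemma FG_diff (hk : 1 ≤ k) (hα0 : 0 ≤ α) (hα1 : α ≤ 1) (hsm : 2*α*((k:ℝ)+1) ≤ 1) (t : ℕ) :
    |Fs k α t 0 - Gs k α t 0| ≤ 6*(k:ℝ)*α := by
  rw [← Ts_row t 0 (by omega), Gs_eq t 0 (by omega)]
  have e1 : ∀ y ∈ Finset.range (k+1), Ts k α t 0 y - Ts k α t 0 y * hf k α y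
      = Ts k α t 0 y * (1 - hf k α y) := fun y _ => by ring
  rw [← Finset.sum_sub_distrib, Finset.sum_congr rfl e1]
  calc |∑ y ∈ Finset.range (k+1), Ts k α t 0 y * (1 - hf k α y)|
      ≤ ∑ y ∈ Finset.range (k+1), |Ts k α t 0 y * (1 - hf k α y)| :=
        Finset.abs_sum_le_sum_abs _ _
    _ ≤ ∑ y ∈ Finset.range (k+1), (if y = 0 then 0 else 6*α) := by
        apply Finset.sum_le_sum
        intro y hy
        rw [Finset.mem_range] at hy
        rcases eq_or_ne y 0 with h0 | h0
        · rw [if_pos h0, h0, abs_mul]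
          rw [show (1:ℝ) - hf k α 0 = 0 by rw [hf_zero]; ring]
          simp
        · rw [if_neg h0, abs_mul]
          have hT : |Ts k α t 0 y| ≤ 2*α := by
            rw [abs_of_nonneg (Ts_nonneg hα0 hα1 t 0 y)]
            exact Ts_top_bound hk hα0 hα1 t y (by omega) (by omega)
          have hh : |1 - hf k α y| ≤ 3 := by
            have := (hbound hk hα0 hsm y (by omega)).2.1
            calc |1 - hf k α y| ≤ |(1:ℝ)| + |hf k α y| := abs_sub _ _
              _ ≤ 1 + 2 := by
                  rw [abs_one]
                  linarith
              _ = 3 := by norm_num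
          calc |Ts k α t 0 y| * |1 - hf k α y| ≤ (2*α) * 3 :=
                mul_le_mul hT hh (abs_nonneg _) (by positivity)
            _ = 6*α := by ring
    _ = 6*(k:ℝ)*α := by
        have e2 : ∀ y ∈ Finset.range (k+1), (if y = 0 then (0:ℝ) else 6*α)
            = 6*α - (if y = 0 then 6*α else 0) := by
          intro y _; split_ifs <;> ring
        rw [Finset.sum_congr rfl e2, Finset.sum_sub_distrib, Finset.sum_const,
          Finset.sum_ite_eq' (Finset.range (k+1)) 0 (fun _ => 6*α),
          if_pos (by simp [Finset.mem_range]), Finset.card_range, nsmul_eq_mul]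
        push_cast
        ring

lemma Fs_main_small (hk : 1 ≤ k) (hα0 : 0 ≤ α) (hα1 : α ≤ 1) (hsm : 2*α*((k:ℝ)+1) ≤ 1)
    (t : ℕ) : |Fs k α t 0 - (1 - α/((k:ℝ)+1))^t| ≤ 10*(k:ℝ)*α := by
  have h1 := FG_diff hk hα0 hα1 hsm t
  have h2 := Gs_bound hk hα0 hα1 hsm t 0 (by omega)
  rw [hf_zero, mul_one] at h2
  have h3 : 2*(k:ℝ)*α * (2 - 2 * Fs k α t 0) ≤ 4*(k:ℝ)*α := by
    have := Fs_nonneg (k := k) hα0 hα1 t 0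
    have hknn : (0:ℝ) ≤ 2*(k:ℝ)*α := by positivity
    nlinarith
  calc |Fs k α t 0 - (1 - α/((k:ℝ)+1))^t|
      ≤ |Fs k α t 0 - Gs k α t 0| + |Gs k α t 0 - (1 - α/((k:ℝ)+1))^t| := by
        have : Fs k α t 0 - (1 - α/((k:ℝ)+1))^t
            = (Fs k α t 0 - Gs k α t 0) + (Gs k α t 0 - (1 - α/((k:ℝ)+1))^t) := by ring
        rw [this]
        exact abs_add_le _ _
    _ ≤ 6*(k:ℝ)*α + 4*(k:ℝ)*α := add_le_add h1 (h2.trans h3)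
    _ = 10*(k:ℝ)*α := by ring

lemma Fs_k0 (t : ℕ) : Fs 0 α t 0 = (1 - α)^t := by
  induction t with
  | zero => simp [Fs]
  | succ t ih =>
    rw [show Fs 0 α (t+1) 0
      = if 0 ≤ 0 then ∑ y ∈ Finset.range 1, Mker α 0 y * Fs 0 α t y else 0 from rfl]
    rw [if_pos le_rfl, Finset.sum_range_one, ih]
    rw [show Mker α 0 0 = 1 - α from rfl]
    ring

end final

open Classical in
lemma bridge (L k : ℕ) (hL : 1 ≤ L) (hk : k ≤ L - 1) (α : ℝ) :
    ∀ t x, x ≤ L → bdStay L α t x (fun _ => {i : ℕ | i ≤ k}) = Fs k α t x := by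
  have hker : ∀ x y, x ≤ k → y ≤ k → bdKernel L α x y = Mker α x y := by
    intro x y hx hy
    unfold bdKernel Mker
    split_ifs <;> first | rfl | omega
  intro t
  induction t with
  | zero =>
    intro x hx
    rw [bdStay_zero L α x hx]
    show _ = if x ≤ k then (1:ℝ) else 0
    by_cases h : x ≤ k
    · rw [if_pos (show x ∈ {i : ℕ | i ≤ k} from h), if_pos h]
    · rw [if_neg (show x ∉ {i : ℕ | i ≤ k} from h), if_neg h]
  | succ t ih =>
    intro x hx
    rw [bdStay_succ L α t x hx _]
    rw [show Fs k α (t+1) x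
      = if x ≤ k then ∑ y ∈ Finset.range (k+1), Mker α x y * Fs k α t y else 0 from rfl]
    by_cases h : x ≤ k
    · rw [if_pos (show x ∈ {i : ℕ | i ≤ k} from h), if_pos h]
      have hsub : Finset.range (k+1) ⊆ Finset.range (L+1) :=
        Finset.range_subset_range.mpr (by omega)
      have e0 : ∀ y ∈ Finset.range (L+1),
          bdKernel L α x y * bdStay L α t y (fun _ => {i : ℕ | i ≤ k})
            = bdKernel L α x y * Fs k α t y := by
        intro y hy
        rw [Finset.mem_range] at hy
        rw [ih y (by omega)]
      have hz : ∀ y ∈ Finset.range (L+1), y ∉ Finset.range (k+1) →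
          bdKernel L α x y * Fs k α t y = 0 := by
        intro y hyL hyk
        rw [Finset.mem_range] at hyL
        rw [Finset.mem_range] at hyk
        rw [Fs_gt t y (by omega), mul_zero]
      rw [Finset.sum_congr rfl e0, ← Finset.sum_subset hsub hz]
      exact Finset.sum_congr rfl (fun y hy => by
        rw [Finset.mem_range] at hy
        rw [hker x y h (by omega)])
    · rw [if_neg (show x ∉ {i : ℕ | i ≤ k} from h), if_neg h]

/-- Part (c) of the key lemma: there is a universal constant `c > 0` such that for all
`0 ≤ k ≤ L−1` and `t ≥ 0`,
`P(X_{t'} ≤ k ∀ t' ≤ t | X_0 = 0) = P(X_{t'} ≥ L−k ∀ t' ≤ t | X_0 = L)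
 = (1 − α/(k+1))^t + O(kα)`. -/
theorem bdStay_asymptotics :
    ∃ c : ℝ, 0 < c ∧ ∀ L : ℕ, 1 ≤ L → ∀ α : ℝ, α ∈ Set.Ioc (0 : ℝ) 1 →
      ∀ k : ℕ, k ≤ L - 1 → ∀ t : ℕ,
        bdStay L α t 0 (fun _ => {i : ℕ | i ≤ k})
          = bdStay L α t L (fun _ => {i : ℕ | L - k ≤ i}) ∧
        |bdStay L α t 0 (fun _ => {i : ℕ | i ≤ k}) - (1 - α / (k + 1)) ^ t| ≤ c * k * α := by
  refine ⟨10, by norm_num, ?_⟩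
  intro L hL α hα k hk t
  obtain ⟨hα0, hα1⟩ := hα
  have hα0' : (0:ℝ) ≤ α := le_of_lt hα0
  constructor
  · exact bdStay_symm L hL α k hk t
  · rw [bridge L k hL hk α t 0 (by omega)]
    rcases Nat.eq_zero_or_pos k with hk0 | hk1
    · subst hk0
      rw [Fs_k0]
      norm_num
    · by_cases hsm : 2*α*((k:ℝ)+1) ≤ 1
      · exact Fs_main_small hk1 hα0' hα1 hsm t
      · have h1 : |Fs k α t 0 - (1 - α/((k:ℝ)+1))^t| ≤ 1 := by
          have hF0 := Fs_nonneg (k := k) hα0' hα1 t 0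
          have hF1 := Fs_le_one hα0' hα1 hk1 t 0
          have hl0 := lam_nonneg (k := k) hα1
          have hl1 := lam_le_one (k := k) (α := α) hα0'
          have hp0 : 0 ≤ (1 - α/((k:ℝ)+1))^t := pow_nonneg hl0 t
          have hp1 : (1 - α/((k:ℝ)+1))^t ≤ 1 := pow_le_one₀ hl0 hl1
          rw [abs_le]
          constructor <;> linarith
        have hk1' : (1:ℝ) ≤ (k:ℝ) := by exact_mod_cast hk1
        have h2 : (1:ℝ) ≤ 10*(k:ℝ)*α := by nlinarith [not_le.mp hsm]
        exact h1.trans h2
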